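/- (Parseval/duality relation for the hyperplane Radon transform) For f a Schwartz function on ℝⁿ and φ a continuous compactly supported function on the space of hyperplanes parametrized by Sⁿ⁻¹ × ℝ with φ(−u,−s) = φ(u,s), one has ∫_{Sⁿ⁻¹×ℝ} f̂(u,s) φ(u,s) du ds = ∫_{ℝⁿ} f(x) φ∨(x) dx, where φ∨(x) = ∫_{Sⁿ⁻¹} φ(u, ⟨x,u⟩) du is the dual Radon transform. -/

import Mathlib

open MeasureTheory
open scoped RealInnerProductSpace

/-- The hyperplane Radon transform `f̂(u,s) = ∫_{⟪x,u⟫=s} f dσ`. -/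
noncomputable def radonTransform {n : ℕ} (f : EuclideanSpace ℝ (Fin n) → ℂ)
    (u : EuclideanSpace ℝ (Fin n)) (s : ℝ) : ℂ :=
  ∫ v : ((ℝ ∙ u)ᗮ : Submodule ℝ (EuclideanSpace ℝ (Fin n))), f (s • u + (v : EuclideanSpace ℝ (Fin n)))

/-- The dual Radon transform `φ∨(x) = ∫_{Sⁿ⁻¹} φ(u, ⟪x,u⟫) du`, averaging `φ` over all
hyperplanes through `x`, with `du` the rotation-invariant (surface) measure on the sphere. -/
noncomputable def dualRadonTransform {n : ℕ} (φ : EuclideanSpace ℝ (Fin n) × ℝ → ℂ)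
    (x : EuclideanSpace ℝ (Fin n)) : ℂ :=
  ∫ u : Metric.sphere (0 : EuclideanSpace ℝ (Fin n)) 1,
    φ ((u : EuclideanSpace ℝ (Fin n)), (⟪x, (u : EuclideanSpace ℝ (Fin n))⟫ : ℝ))
      ∂((volume : Measure (EuclideanSpace ℝ (Fin n))).toSphere)

section Aux

variable {n : ℕ}

private lemma coe_inner_orth {u : EuclideanSpace ℝ (Fin n)}
    (v : ((ℝ ∙ u)ᗮ : Submodule ℝ (EuclideanSpace ℝ (Fin n)))) :
    ⟪(v : EuclideanSpace ℝ (Fin n)), u⟫ = 0 := by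
  have h := v.2
  rw [Submodule.mem_orthogonal] at h
  rw [real_inner_comm]
  exact h u (Submodule.mem_span_singleton_self u)

private lemma inner_split {u : EuclideanSpace ℝ (Fin n)} (hu : ‖u‖ = 1) (s : ℝ)
    (v : ((ℝ ∙ u)ᗮ : Submodule ℝ (EuclideanSpace ℝ (Fin n)))) :
    ⟪s • u + (v : EuclideanSpace ℝ (Fin n)), u⟫ = s := by
  rw [inner_add_left, real_inner_smul_left, coe_inner_orth v,
    real_inner_self_eq_norm_mul_norm, hu]
  ring

/-- The splitting `(s, v) ↦ s • u + v` as a continuous linear equivalence. -/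
private noncomputable def splitEquiv (u : EuclideanSpace ℝ (Fin n)) (hu : ‖u‖ = 1) :
    (ℝ × ((ℝ ∙ u)ᗮ : Submodule ℝ (EuclideanSpace ℝ (Fin n)))) ≃L[ℝ] EuclideanSpace ℝ (Fin n) := by
  refine LinearEquiv.toContinuousLinearEquiv
    (LinearEquiv.ofBijective
      ((LinearMap.toSpanSingleton ℝ (EuclideanSpace ℝ (Fin n)) u).coprod ((ℝ ∙ u)ᗮ).subtype) ⟨?_, ?_⟩)
  · intro p q hpq
    have hpq' : p.1 • u + (p.2 : EuclideanSpace ℝ (Fin n)) = q.1 • u + (q.2 : EuclideanSpace ℝ (Fin n)) := hpq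
    have h1 : p.1 = q.1 := by
      have := congrArg (fun x => (⟪x, u⟫ : ℝ)) hpq'
      simpa [inner_split hu] using this
    have h2 : (p.2 : EuclideanSpace ℝ (Fin n)) = q.2 := by
      rw [h1] at hpq'
      exact add_left_cancel hpq'
    exact Prod.ext h1 (Subtype.coe_injective h2)
  · intro x
    obtain ⟨y, hy, z, hz, hxyz⟩ := (ℝ ∙ u).exists_add_mem_mem_orthogonal x
    obtain ⟨c, rfl⟩ := Submodule.mem_span_singleton.mp hy
    exact ⟨(c, ⟨z, hz⟩), hxyz.symm⟩

private lemma splitEquiv_apply (u : EuclideanSpace ℝ (Fin n)) (hu : ‖u‖ = 1)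
    (p : ℝ × ((ℝ ∙ u)ᗮ : Submodule ℝ (EuclideanSpace ℝ (Fin n)))) :
    splitEquiv u hu p = p.1 • u + (p.2 : EuclideanSpace ℝ (Fin n)) := rfl

private lemma measurePreserving_splitEquiv (u : EuclideanSpace ℝ (Fin n)) (hu : ‖u‖ = 1) :
    MeasurePreserving (splitEquiv u hu) (volume.prod volume) volume := by
  set K : Submodule ℝ (EuclideanSpace ℝ (Fin n)) := (ℝ ∙ u)ᗮ with hK
  set m := Module.finrank ℝ K with hm
  let b : OrthonormalBasis (Fin m) ℝ K := stdOrthonormalBasis ℝ K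
  let v : Fin (m + 1) → EuclideanSpace ℝ (Fin n) := Fin.cons u fun i => (b i : EuclideanSpace ℝ (Fin n))
  have hub : ∀ i, ⟪u, ((b i : K) : EuclideanSpace ℝ (Fin n))⟫ = 0 := fun i => by
    rw [real_inner_comm]; exact coe_inner_orth (b i)
  have hbb : ∀ i j, (⟪((b i : K) : EuclideanSpace ℝ (Fin n)), ((b j : K) : EuclideanSpace ℝ (Fin n))⟫ : ℝ) =
      if i = j then 1 else 0 := by
    intro i j
    rw [← Submodule.coe_inner]
    exact orthonormal_iff_ite.mp b.orthonormal i j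
  have hon : Orthonormal ℝ v := by
    rw [orthonormal_iff_ite]
    intro i j
    induction i using Fin.cases with
    | zero =>
      induction j using Fin.cases with
      | zero =>
        simp only [v, Fin.cons_zero, if_pos rfl]
        rw [real_inner_self_eq_norm_mul_norm, hu]
        norm_num
      | succ j =>
        simpa [v, (Fin.succ_ne_zero j).symm] using hub j
    | succ i =>
      induction j using Fin.cases with
      | zero =>
        have := hub i
        rw [real_inner_comm] at this
        simpa [v, Fin.succ_ne_zero i] using this
      | succ j =>
        simpa [v, Fin.succ_inj] using hbb i j
  have hsp : ⊤ ≤ Submodule.span ℝ (Set.range v) := by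
    rw [← Submodule.sup_orthogonal_of_hasOrthogonalProjection (K := ℝ ∙ u)]
    apply sup_le
    · rw [Submodule.span_singleton_le_iff_mem]
      exact Submodule.subset_span ⟨0, by simp [v]⟩
    · intro x hx
      have hx' : x = ∑ i, b.repr ⟨x, hx⟩ i • ((b i : K) : EuclideanSpace ℝ (Fin n)) := by
        have h : (⟨x, hx⟩ : K) = ∑ i, b.repr ⟨x, hx⟩ i • b i := (b.sum_repr _).symm
        have h2 := congrArg (Subtype.val) h
        simpa [Submodule.coe_sum] using h2
      rw [hx']
      exact Submodule.sum_mem _ fun i _ => Submodule.smul_mem _ _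
        (Submodule.subset_span ⟨i.succ, by simp [v]⟩)
  let B : OrthonormalBasis (Fin (m + 1)) ℝ (EuclideanSpace ℝ (Fin n)) := OrthonormalBasis.mk hon hsp
  have mp5 : MeasurePreserving (Prod.map (id : ℝ → ℝ) b.repr)
      (volume.prod volume) (volume.prod volume) :=
    (MeasurePreserving.id volume).prod b.measurePreserving_repr
  have mp4 : MeasurePreserving (Prod.map (id : ℝ → ℝ) (WithLp.equiv 2 (Fin m → ℝ)))
      (volume.prod volume) (volume.prod volume) :=
    (MeasurePreserving.id volume).prod (PiLp.volume_preserving_ofLp (Fin m))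
  have mp3 := (volume_preserving_piFinSuccAbove (fun _ : Fin (m + 1) => ℝ) 0).symm
  have mp2 : MeasurePreserving (WithLp.equiv 2 (Fin (m + 1) → ℝ)).symm := PiLp.volume_preserving_toLp (Fin (m + 1))
  have mp1 := B.measurePreserving_repr_symm
  have comp := mp1.comp (mp2.comp (mp3.comp (mp4.comp mp5)))
  have heq : (⇑B.repr.symm ∘ (⇑(WithLp.equiv 2 (Fin (m + 1) → ℝ)).symm ∘
      (⇑(MeasurableEquiv.piFinSuccAbove (fun _ : Fin (m + 1) => ℝ) 0).symm ∘
        (Prod.map (id : ℝ → ℝ) (WithLp.equiv 2 (Fin m → ℝ)) ∘ Prod.map (id : ℝ → ℝ) b.repr)))) =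
      ⇑(splitEquiv u hu) := by
    funext p
    rw [splitEquiv_apply]
    simp only [Function.comp_apply, Prod.map_apply, id_eq]
    rw [← B.sum_repr_symm, Fin.sum_univ_succ]
    have hp2 : (p.2 : EuclideanSpace ℝ (Fin n)) = ∑ i, b.repr p.2 i • ((b i : K) : EuclideanSpace ℝ (Fin n)) := by
      have h : (p.2 : K) = ∑ i, b.repr p.2 i • b i := (b.sum_repr _).symm
      have h2 := congrArg (Subtype.val) h
      simpa [Submodule.coe_sum] using h2
    have hB0 : B 0 = u := by simp [B, OrthonormalBasis.coe_mk, v]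
    have hBs : ∀ i : Fin m, B i.succ = ((b i : K) : EuclideanSpace ℝ (Fin n)) := by
      intro i; simp [B, OrthonormalBasis.coe_mk, v]
    have hpi : ∀ (y : WithLp 2 (Fin m → ℝ)) (i : Fin m), (WithLp.equiv 2 (Fin m → ℝ)) y i = y i :=
      fun _ _ => rfl
    simp only [WithLp.equiv_symm_apply, PiLp.toLp_apply, MeasurableEquiv.piFinSuccAbove_symm_apply,
      Fin.insertNthEquiv_zero, Fin.consEquiv_apply, Fin.cons_zero, Fin.cons_succ,
      hB0, hBs, hpi]
    rw [hp2]
    rfl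
  rw [← heq] at *
  exact comp

private lemma radon_slice (f : SchwartzMap (EuclideanSpace ℝ (Fin n)) ℂ)
    (φ : EuclideanSpace ℝ (Fin n) × ℝ → ℂ) (hφcont : Continuous φ)
    (hφbdd : ∃ C, ∀ z, ‖φ z‖ ≤ C) (u : EuclideanSpace ℝ (Fin n)) (hu : ‖u‖ = 1) :
    (∫ s : ℝ, radonTransform (fun x => f x) u s * φ (u, s)) =
      ∫ x : EuclideanSpace ℝ (Fin n), f x * φ (u, ⟪x, u⟫) := by
  set K : Submodule ℝ (EuclideanSpace ℝ (Fin n)) := (ℝ ∙ u)ᗮ with hK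
  let eqv : (ℝ × K) ≃ᵐ EuclideanSpace ℝ (Fin n) :=
    (splitEquiv u hu).toHomeomorph.toMeasurableEquiv
  have hcoe : ⇑eqv = fun p : ℝ × K => p.1 • u + (p.2 : EuclideanSpace ℝ (Fin n)) := rfl
  have mp : MeasurePreserving eqv (volume.prod volume) volume := measurePreserving_splitEquiv u hu
  obtain ⟨C, hC⟩ := hφbdd
  have hφm : Continuous fun x : EuclideanSpace ℝ (Fin n) => φ (u, ⟪x, u⟫) :=
    hφcont.comp (continuous_const.prodMk (continuous_id.inner continuous_const))
  have hFi : Integrable (fun x => f x * φ (u, ⟪x, u⟫)) volume := by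
    have h1 : Integrable (fun x => φ (u, ⟪x, u⟫) * f x) volume :=
      f.integrable.bdd_mul (c := C) hφm.aestronglyMeasurable (Filter.Eventually.of_forall fun x => hC _)
    exact h1.congr (Filter.Eventually.of_forall fun x => mul_comm _ _)
  have hGi : Integrable ((fun x => f x * φ (u, ⟪x, u⟫)) ∘ eqv) (volume.prod volume) :=
    (mp.integrable_comp_emb eqv.measurableEmbedding).mpr hFi
  have hGi' : Integrable (fun p : ℝ × K =>
      f (p.1 • u + (p.2 : EuclideanSpace ℝ (Fin n))) * φ (u, p.1)) (volume.prod volume) := by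
    refine hGi.congr (Filter.Eventually.of_forall fun p => ?_)
    simp only [Function.comp_apply, hcoe, inner_split hu]
  calc
    (∫ s : ℝ, radonTransform (fun x => f x) u s * φ (u, s))
        = ∫ s : ℝ, ∫ w : K, f (s • u + (w : EuclideanSpace ℝ (Fin n))) * φ (u, s) := by
          refine integral_congr_ae (Filter.Eventually.of_forall fun s => ?_)
          exact (integral_mul_const (φ (u, s)) _).symm
    _ = ∫ p : ℝ × K, f (p.1 • u + (p.2 : EuclideanSpace ℝ (Fin n))) * φ (u, p.1)
            ∂(volume.prod volume) :=
          (integral_prod _ hGi').symm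
    _ = ∫ p : ℝ × K, (fun x => f x * φ (u, ⟪x, u⟫)) (eqv p) ∂(volume.prod volume) := by
          refine integral_congr_ae (Filter.Eventually.of_forall fun p => ?_)
          simp only [hcoe, inner_split hu]
    _ = ∫ x : EuclideanSpace ℝ (Fin n), f x * φ (u, ⟪x, u⟫) :=
          mp.integral_comp eqv.measurableEmbedding (fun x => f x * φ (u, ⟪x, u⟫))

end Aux

/-- **Parseval/duality relation for the hyperplane Radon transform**:
`∫_{Sⁿ⁻¹×ℝ} f̂(u,s) φ(u,s) du ds = ∫_{ℝⁿ} f(x) φ∨(x) dx` for a Schwartz function `f` and a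
continuous compactly supported `φ` on `Sⁿ⁻¹ × ℝ` satisfying `φ(−u,−s) = φ(u,s)`. -/
theorem radon_parseval {n : ℕ} (f : SchwartzMap (EuclideanSpace ℝ (Fin n)) ℂ)
    (φ : EuclideanSpace ℝ (Fin n) × ℝ → ℂ) (hφcont : Continuous φ)
    (hφsupp : HasCompactSupport φ)
    (hφeven : ∀ (u : EuclideanSpace ℝ (Fin n)) (s : ℝ), φ (-u, -s) = φ (u, s)) :
    (∫ u : Metric.sphere (0 : EuclideanSpace ℝ (Fin n)) 1, ∫ s : ℝ,
        radonTransform (fun x => f x) (u : EuclideanSpace ℝ (Fin n)) s *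
          φ ((u : EuclideanSpace ℝ (Fin n)), s)
        ∂(volume) ∂((volume : Measure (EuclideanSpace ℝ (Fin n))).toSphere)) =
      ∫ x : EuclideanSpace ℝ (Fin n), f x * dualRadonTransform φ x := by
  obtain ⟨C, hC⟩ := hφcont.bounded_above_of_compact_support hφsupp
  have hslice : ∀ u : Metric.sphere (0 : EuclideanSpace ℝ (Fin n)) 1,
      (∫ s : ℝ, radonTransform (fun x => f x) (u : EuclideanSpace ℝ (Fin n)) s *
        φ ((u : EuclideanSpace ℝ (Fin n)), s)) =
      ∫ x : EuclideanSpace ℝ (Fin n), f x * φ ((u : EuclideanSpace ℝ (Fin n)), ⟪x, (u : EuclideanSpace ℝ (Fin n))⟫) :=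
    fun u => radon_slice f φ hφcont ⟨C, hC⟩ _ (mem_sphere_zero_iff_norm.mp u.2)
  have hcont : Continuous (fun z : Metric.sphere (0 : EuclideanSpace ℝ (Fin n)) 1 × EuclideanSpace ℝ (Fin n) =>
      f z.2 * φ ((z.1 : EuclideanSpace ℝ (Fin n)), ⟪z.2, (z.1 : EuclideanSpace ℝ (Fin n))⟫)) :=
    (f.continuous.comp continuous_snd).mul
      (hφcont.comp ((continuous_subtype_val.comp continuous_fst).prodMk
        (continuous_snd.inner (continuous_subtype_val.comp continuous_fst))))
  have hJoint : Integrable (Function.uncurry fun (u : Metric.sphere (0 : EuclideanSpace ℝ (Fin n)) 1)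
      (x : EuclideanSpace ℝ (Fin n)) =>
        f x * φ ((u : EuclideanSpace ℝ (Fin n)), ⟪x, (u : EuclideanSpace ℝ (Fin n))⟫))
      (((volume : Measure (EuclideanSpace ℝ (Fin n))).toSphere).prod volume) := by
    refine Integrable.mono' (g := fun z => C * ‖f z.2‖)
      ((integrable_const C).mul_prod f.integrable.norm)
      hcont.aestronglyMeasurable (Filter.Eventually.of_forall fun z => ?_)
    rw [Function.uncurry]
    calc ‖f z.2 * φ _‖ = ‖f z.2‖ * ‖φ _‖ := norm_mul _ _
      _ ≤ ‖f z.2‖ * C := mul_le_mul_of_nonneg_left (hC _) (norm_nonneg _)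
      _ = C * ‖f z.2‖ := mul_comm _ _
  calc
    (∫ u : Metric.sphere (0 : EuclideanSpace ℝ (Fin n)) 1, ∫ s : ℝ,
        radonTransform (fun x => f x) (u : EuclideanSpace ℝ (Fin n)) s *
          φ ((u : EuclideanSpace ℝ (Fin n)), s)
        ∂(volume) ∂((volume : Measure (EuclideanSpace ℝ (Fin n))).toSphere))
      = ∫ u : Metric.sphere (0 : EuclideanSpace ℝ (Fin n)) 1,
          ∫ x : EuclideanSpace ℝ (Fin n),
            f x * φ ((u : EuclideanSpace ℝ (Fin n)), ⟪x, (u : EuclideanSpace ℝ (Fin n))⟫)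
          ∂(volume) ∂((volume : Measure (EuclideanSpace ℝ (Fin n))).toSphere) :=
        integral_congr_ae (Filter.Eventually.of_forall hslice)
    _ = ∫ x : EuclideanSpace ℝ (Fin n), ∫ u : Metric.sphere (0 : EuclideanSpace ℝ (Fin n)) 1,
          f x * φ ((u : EuclideanSpace ℝ (Fin n)), ⟪x, (u : EuclideanSpace ℝ (Fin n))⟫)
          ∂((volume : Measure (EuclideanSpace ℝ (Fin n))).toSphere) ∂(volume) :=
        integral_integral_swap hJoint
    _ = ∫ x : EuclideanSpace ℝ (Fin n), f x * dualRadonTransform φ x := by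
        refine integral_congr_ae (Filter.Eventually.of_forall fun x => ?_)
        exact integral_const_mul (f x) fun uu : Metric.sphere (0 : EuclideanSpace ℝ (Fin n)) 1 =>
          φ ((uu : EuclideanSpace ℝ (Fin n)), ⟪x, (uu : EuclideanSpace ℝ (Fin n))⟫)
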